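/- Let Φ : ℝⁿ → ℝⁿ be C¹ with det(DΦ(x)) ≠ 0 on a dense open set, let R : ℝⁿ → ℝ, G : ℝⁿ → ℝⁿ, and define F(x) = R(x)·adj(DΦ(x))·G(Φ(x)). Suppose I₁, …, Iₘ : ℝⁿ → ℝ (m ≤ n−1) are C¹ functions whose gradients are linearly independent on a dense open subset of ℝⁿ, and each satisfies ∇Iⱼ · G ≡ 0. Then the gradients of H₁, …, Hₘ, where Hⱼ := Iⱼ ∘ Φ, are linearly independent on a dense open subset of ℝⁿ (in particular on every nonempty open set there is a point where they are independent). -/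

import Mathlib

open Matrix

/-- Jacobian matrix of a map `Φ : ℝⁿ → ℝⁿ` at a point `x`. -/
noncomputable def jacobian {n : ℕ} (Φ : (Fin n → ℝ) → (Fin n → ℝ)) (x : Fin n → ℝ) :
    Matrix (Fin n) (Fin n) ℝ :=
  Matrix.of fun i j => fderiv ℝ Φ x (Pi.single j 1) i

/-- Gradient of a scalar function on `ℝⁿ` at a point. -/
noncomputable def gradn {n : ℕ} (I : (Fin n → ℝ) → ℝ) (x : Fin n → ℝ) : Fin n → ℝ :=
  fun i => fderiv ℝ I x (Pi.single i 1)

lemma jacobian_eq_toMatrix' {n : ℕ} (Φ : (Fin n → ℝ) → (Fin n → ℝ)) (x : Fin n → ℝ) :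
    jacobian Φ x = LinearMap.toMatrix' ((fderiv ℝ Φ x) : (Fin n → ℝ) →ₗ[ℝ] (Fin n → ℝ)) := by
  have h : ∀ j : Fin n, (fun j' => if j' = j then (1:ℝ) else 0) = Pi.single j 1 := by
    intro j; funext k; simp [Pi.single_apply]
  ext i j
  simp [jacobian, LinearMap.toMatrix'_apply, h]

lemma map_nhds_of_det {n : ℕ} {Φ : (Fin n → ℝ) → (Fin n → ℝ)} (hΦ : ContDiff ℝ 1 Φ)
    {x : Fin n → ℝ} (hd : (jacobian Φ x).det ≠ 0) :
    Filter.map Φ (nhds x) = nhds (Φ x) := by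
  have hdet' : LinearMap.det ((fderiv ℝ Φ x) : (Fin n → ℝ) →ₗ[ℝ] (Fin n → ℝ)) ≠ 0 := by
    rw [← LinearMap.det_toMatrix', ← jacobian_eq_toMatrix']; exact hd
  set e := (((fderiv ℝ Φ x) : (Fin n → ℝ) →ₗ[ℝ] (Fin n → ℝ)).equivOfDetNeZero hdet').toContinuousLinearEquiv with he
  have hcoe : (e : (Fin n → ℝ) →L[ℝ] (Fin n → ℝ)) = fderiv ℝ Φ x := by
    ext v
    simp [he, LinearEquiv.coe_toContinuousLinearEquiv']
  have hs : HasStrictFDerivAt Φ (e : (Fin n → ℝ) →L[ℝ] (Fin n → ℝ)) x := by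
    rw [hcoe]
    exact (hΦ.contDiffAt).hasStrictFDerivAt one_ne_zero
  exact hs.map_nhds_eq_of_equiv

lemma gradn_comp {n : ℕ} {Φ : (Fin n → ℝ) → (Fin n → ℝ)} (hΦ : ContDiff ℝ 1 Φ)
    {I : (Fin n → ℝ) → ℝ} (hI : ContDiff ℝ 1 I) (x : Fin n → ℝ) :
    gradn (fun y => I (Φ y)) x = (jacobian Φ x)ᵀ *ᵥ gradn I (Φ x) := by
  funext i
  have hc : fderiv ℝ (fun y => I (Φ y)) x =
      (fderiv ℝ I (Φ x)).comp (fderiv ℝ Φ x) :=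
    fderiv_comp x (hI.differentiable one_ne_zero _) (hΦ.differentiable one_ne_zero _)
  have hsum := LinearMap.pi_apply_eq_sum_univ
    ((fderiv ℝ I (Φ x)) : (Fin n → ℝ) →ₗ[ℝ] ℝ) (fderiv ℝ Φ x (Pi.single i 1))
  simp only [ContinuousLinearMap.coe_coe] at hsum
  have h : ∀ k : Fin n, (fun j => if k = j then (1:ℝ) else 0) = Pi.single k 1 := by
    intro k; funext j; simp [Pi.single_apply, eq_comm]
  simp [gradn, hc, Matrix.mulVec, dotProduct, hsum, jacobian, mul_comm, h]
theorem stmt19 {n m : ℕ} (hm : m ≤ n - 1)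
    (Φ G : (Fin n → ℝ) → (Fin n → ℝ)) (hΦ : ContDiff ℝ 1 Φ)
    (S : Set (Fin n → ℝ)) (hSopen : IsOpen S) (hSdense : Dense S)
    (hdet : ∀ x ∈ S, (jacobian Φ x).det ≠ 0)
    (R : (Fin n → ℝ) → ℝ)
    (F : (Fin n → ℝ) → (Fin n → ℝ))
    (hF : ∀ x, F x = R x • (Matrix.adjugate (jacobian Φ x)) *ᵥ (G (Φ x)))
    (I : Fin m → (Fin n → ℝ) → ℝ) (hI : ∀ j, ContDiff ℝ 1 (I j))
    (T : Set (Fin n → ℝ)) (hTopen : IsOpen T) (hTdense : Dense T)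
    (hind : ∀ x ∈ T, LinearIndependent ℝ (fun j => gradn (I j) x))
    (hIG : ∀ j, ∀ u, fderiv ℝ (I j) u (G u) = 0) :
    ∃ W : Set (Fin n → ℝ), IsOpen W ∧ Dense W ∧
      ∀ x ∈ W, LinearIndependent ℝ (fun j => gradn (fun y => I j (Φ y)) x) := by
  refine ⟨S ∩ Φ ⁻¹' T, hSopen.inter (hTopen.preimage hΦ.continuous), ?_, ?_⟩
  · -- density
    refine dense_iff_inter_open.mpr ?_
    intro U hU hUne
    obtain ⟨x, hxU, hxS⟩ := hSdense.inter_open_nonempty U hU hUne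
    have hmap := map_nhds_of_det hΦ (hdet x hxS)
    have hUS : U ∩ S ∈ nhds x := (hU.inter hSopen).mem_nhds ⟨hxU, hxS⟩
    have himg : Φ '' (U ∩ S) ∈ nhds (Φ x) := by
      rw [← hmap]; exact Filter.image_mem_map hUS
    obtain ⟨y, hyimg, hyT⟩ := hTdense.inter_open_nonempty (interior (Φ '' (U ∩ S)))
      isOpen_interior ⟨Φ x, mem_interior_iff_mem_nhds.2 himg⟩
    obtain ⟨u, ⟨huU, huS⟩, rfl⟩ := interior_subset (s := Φ '' (U ∩ S)) hyimg
    exact ⟨u, huU, huS, hyT⟩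
  · -- independence
    rintro x ⟨hxS, hxT⟩
    have hJ : ((jacobian Φ x)ᵀ).det ≠ 0 := by
      rw [Matrix.det_transpose]; exact hdet x hxS
    have hinj : Function.Injective (((jacobian Φ x)ᵀ).mulVecLin) := by
      rw [Matrix.coe_mulVecLin] at *
      exact Matrix.mulVec_injective_iff_isUnit.2
        ((Matrix.isUnit_iff_isUnit_det _).2 (isUnit_iff_ne_zero.2 hJ))
    have hli := (hind (Φ x) hxT).map' (((jacobian Φ x)ᵀ).mulVecLin)
      (LinearMap.ker_eq_bot.2 hinj)
    have heq : (fun j => gradn (fun y => I j (Φ y)) x) =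
        (((jacobian Φ x)ᵀ).mulVecLin) ∘ (fun j => gradn (I j) (Φ x)) := by
      funext j
      simp [Function.comp, Matrix.mulVecLin_apply, gradn_comp hΦ (hI j) x, Matrix.mulVec_transpose]
    rw [heq]
    exact hli
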